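/- Let F be a field of characteristic zero and f ∈ F[X] a polynomial of degree at least 2 that is not a monomial (not of the form c·X^e). Then for every n ≥ 1, the iterates f^{(1)}, f^{(2)}, …, f^{(n)} are multiplicatively independent modulo constants: there is no nonzero integer vector (k₁,…,k_n) with (f^{(1)})^{k₁}⋯(f^{(n)})^{k_n} ∈ F*. -/

import Mathlib

open Polynomial

section Helpers

variable {K : Type*} [Field K]

private lemma iterEval (f : K[X]) (i : ℕ) (α : K) :
    ((fun p => f.comp p)^[i] X).eval α = (fun x => f.eval x)^[i] α := by
  induction i with
  | zero => simp
  | succ i ih =>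
      rw [Function.iterate_succ_apply', Function.iterate_succ_apply']
      simp only [eval_comp, ih]

private lemma iterNatDegree (f : K[X]) (i : ℕ) :
    ((fun p => f.comp p)^[i] X).natDegree = f.natDegree ^ i := by
  induction i with
  | zero => simp
  | succ i ih =>
      rw [Function.iterate_succ_apply', natDegree_comp, ih, pow_succ]
      ring

private lemma iterNeZero (f : K[X]) (hd : 2 ≤ f.natDegree) (i : ℕ) (hi : 1 ≤ i) :
    ((fun p => f.comp p)^[i] X) ≠ 0 := by
  apply Polynomial.ne_zero_of_natDegree_gt (n := 0)
  rw [iterNatDegree]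
  exact pow_pos (by omega) i

private lemma iterMap {L : Type*} [Field L] (φ : K →+* L) (f : K[X]) (i : ℕ) :
    ((fun p => f.comp p)^[i] X).map φ = (fun p => (f.map φ).comp p)^[i] X := by
  induction i with
  | zero => simp
  | succ i ih =>
      rw [Function.iterate_succ_apply', Function.iterate_succ_apply',
        Polynomial.map_comp, ih]

private lemma rmProd {ι : Type*} (s : Finset ι) (g : ι → K[X]) (hg : ∀ i ∈ s, g i ≠ 0)
    (a : K) :
    rootMultiplicity a (∏ i ∈ s, g i) = ∑ i ∈ s, rootMultiplicity a (g i) := by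
  classical
  induction s using Finset.induction_on with
  | empty => simp [rootMultiplicity_eq_zero (by simp : ¬ IsRoot 1 a)]
  | insert _ _ hnot ih =>
      rename_i b t
      rw [Finset.prod_insert hnot, Finset.sum_insert hnot,
        rootMultiplicity_mul, ih (fun i hi => hg i (Finset.mem_insert_of_mem hi))]
      exact mul_ne_zero (hg b (Finset.mem_insert_self b t))
        (Finset.prod_ne_zero_iff.2 (fun i hi => hg i (Finset.mem_insert_of_mem hi)))

private lemma rmPow (p : K[X]) (hp : p ≠ 0) (e : ℕ) (a : K) :
    rootMultiplicity a (p ^ e) = e * rootMultiplicity a p := by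
  induction e with
  | zero => simp [rootMultiplicity_eq_zero (by simp : ¬ IsRoot 1 a)]
  | succ e ih =>
      rw [pow_succ, rootMultiplicity_mul (mul_ne_zero (pow_ne_zero e hp) hp), ih]
      ring

/-- If all roots of `g` are equal to `u` in an algebraically closed field, then
`g` is a scaled power of `X - C u`. -/
private lemma allRootsEq [IsAlgClosed K] (g : K[X]) (hg : g ≠ 0) (u : K)
    (h : ∀ x, g.eval x = 0 → x = u) :
    g = C g.leadingCoeff * (X - C u) ^ g.natDegree := by
  have hs : g.Splits := IsAlgClosed.splits g
  have hprod := hs.eq_prod_roots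
  have hcard : Multiset.card g.roots = g.natDegree := by
    have := hs.natDegree_eq_card_roots
    omega
  have hroots : g.roots = Multiset.replicate g.natDegree u := by
    apply Multiset.eq_replicate.2
    exact ⟨hcard, fun b hb => h b ((mem_roots hg).1 hb)⟩
  have hprod2 : (Multiset.map (fun a => X - C a) g.roots).prod = (X - C u) ^ g.natDegree := by
    rw [hroots, Multiset.map_replicate, Multiset.prod_replicate]
  conv_lhs => rw [hprod, hprod2]

/-- A genuinely shifted power of `(X - C u)` (with `u ≠ 0`, char zero) is never of the
form `C b * X ^ d`. -/
private lemma shiftedNe [CharZero K] {d : ℕ} (hd : 2 ≤ d) (a u w b : K)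
    (ha : a ≠ 0) (hu : u ≠ 0) :
    C a * (X - C u) ^ d + C w ≠ C b * X ^ d := by
  intro h
  have h2 := congrArg (fun p => Polynomial.eval 0 (Polynomial.derivative p)) h
  simp only [derivative_add, derivative_C, add_zero, derivative_C_mul, derivative_pow,
    derivative_X_pow, derivative_sub, derivative_X, sub_zero, mul_one, eval_mul, eval_C,
    eval_pow, eval_sub, eval_X, eval_natCast, eval_mul, zero_sub] at h2
  have h0 : (0:K) ^ (d - 1) = 0 := zero_pow (by omega)
  rw [h0] at h2
  have : a * ((d : K) * (-u) ^ (d - 1)) = 0 := by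
    simpa using h2
  rcases mul_eq_zero.1 this with h' | h'
  · exact ha h'
  · rcases mul_eq_zero.1 h' with h'' | h''
    · exact (Nat.cast_ne_zero.2 (by omega : d ≠ 0)) h''
    · exact hu (neg_eq_zero.1 (pow_eq_zero_iff (by omega : d - 1 ≠ 0) |>.1 h''))

end Helpers

section Key

variable {K : Type*} [Field K] [IsAlgClosed K] [CharZero K]

/-- Key dynamical lemma: there is a point whose `m`-th image is `0` but no earlier
image (including itself) is `0`. -/
private lemma keyLemma (f : K[X]) (hd : 2 ≤ f.natDegree)
    (hmono : ¬ ∃ (c : K) (e : ℕ), f = C c * X ^ e) (m : ℕ) (hm : 1 ≤ m) :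
    ∃ α : K, (fun x => f.eval x)^[m] α = 0 ∧ ∀ t < m, (fun x => f.eval x)^[t] α ≠ 0 := by
  classical
  set d := f.natDegree with hdef
  have hgne : ∀ γ : K, f - C γ ≠ 0 := by
    intro γ
    apply Polynomial.ne_zero_of_natDegree_gt (n := 0)
    rw [natDegree_sub_C]
    omega
  by_cases hSM : ∃ (a u v : K), f = C a * (X - C u) ^ d + C v
  · obtain ⟨a, u, v, hf⟩ := hSM
    have ha : a ≠ 0 := by
      intro h
      rw [h] at hf
      simp only [map_zero, zero_mul, zero_add] at hf
      rw [hf, natDegree_C] at hdef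
      omega
    by_cases hu : u = 0
    · -- f = C a * X ^ d + C v with v ≠ 0
      subst hu
      simp only [map_zero, sub_zero] at hf
      have hv : v ≠ 0 := by
        intro h
        exact hmono ⟨a, d, by rw [hf, h, map_zero, add_zero]⟩
      have step : ∀ γ : K, γ ≠ v → ∃ α, f.eval α = γ ∧ α ≠ 0 ∧ α ≠ v := by
        intro γ hγ
        have h0 : f.eval 0 = v := by
          rw [hf]; simp [zero_pow (by omega : d ≠ 0)]
        by_contra hcon
        push_neg at hcon
        have hall : ∀ x, (f - C γ).eval x = 0 → x = v := by
          intro x hx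
          rw [eval_sub, eval_C, sub_eq_zero] at hx
          have hx0 : x ≠ 0 := by
            intro h; rw [h, h0] at hx; exact hγ hx.symm
          exact hcon x hx hx0
        have heq := allRootsEq (f - C γ) (hgne γ) v hall
        rw [natDegree_sub_C, ← hdef] at heq
        have : C (f - C γ).leadingCoeff * (X - C v) ^ d + C (γ - v) = C a * X ^ d := by
          rw [← heq, hf, map_sub]
          ring
        exact shiftedNe hd _ v _ a
          (leadingCoeff_ne_zero.2 (hgne γ)) hv this
      -- build the chain
      suffices h : ∀ m, 1 ≤ m → ∃ α : K,
          (fun x => f.eval x)^[m] α = 0 ∧ (∀ t < m, (fun x => f.eval x)^[t] α ≠ 0) ∧ α ≠ v by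
        obtain ⟨α, h1, h2, _⟩ := h m hm
        exact ⟨α, h1, h2⟩
      intro m hm
      induction m, hm using Nat.le_induction with
      | base =>
          obtain ⟨α, h1, h2, h3⟩ := step 0 (Ne.symm hv)
          exact ⟨α, by simpa using h1, by
            intro t ht
            interval_cases t
            simpa using h2, h3⟩
      | succ m hm ih =>
          obtain ⟨α', h1, h2, h3⟩ := ih
          obtain ⟨α, hα1, hα2, hα3⟩ := step α' h3
          refine ⟨α, ?_, ?_, hα3⟩
          · rw [Function.iterate_succ_apply]
            simpa [hα1] using h1
          · intro t ht
            match t with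
            | 0 => simpa using hα2
            | t + 1 =>
                rw [Function.iterate_succ_apply]
                simp only [hα1]
                exact h2 t (by omega)
    · -- f = C a * (X - C u) ^ d + C v with u ≠ 0
      have step : ∀ γ : K, ∃ α, f.eval α = γ ∧ α ≠ 0 := by
        intro γ
        by_cases hγ : γ = v
        · refine ⟨u, ?_, hu⟩
          rw [hf, hγ]
          simp [zero_pow (by omega : d ≠ 0)]
        · by_contra hcon
          push_neg at hcon
          have hall : ∀ x, (f - C γ).eval x = 0 → x = 0 := by
            intro x hx
            rw [eval_sub, eval_C, sub_eq_zero] at hx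
            exact hcon x hx
          have heq := allRootsEq (f - C γ) (hgne γ) 0 hall
          rw [natDegree_sub_C, ← hdef, map_zero, sub_zero] at heq
          have : C a * (X - C u) ^ d + C (v - γ) = C (f - C γ).leadingCoeff * X ^ d := by
            rw [← heq, hf, map_sub]
            ring
          exact shiftedNe hd a u _ _ ha hu this
      suffices h : ∀ m, 1 ≤ m → ∃ α : K,
          (fun x => f.eval x)^[m] α = 0 ∧ (∀ t < m, (fun x => f.eval x)^[t] α ≠ 0) by
        exact h m hm
      intro m hm
      induction m, hm using Nat.le_induction with
      | base =>
          obtain ⟨α, h1, h2⟩ := step 0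
          exact ⟨α, by simpa using h1, by
            intro t ht
            interval_cases t
            simpa using h2⟩
      | succ m hm ih =>
          obtain ⟨α', h1, h2⟩ := ih
          obtain ⟨α, hα1, hα2⟩ := step α'
          refine ⟨α, ?_, ?_⟩
          · rw [Function.iterate_succ_apply]
            simpa [hα1] using h1
          · intro t ht
            match t with
            | 0 => simpa using hα2
            | t + 1 =>
                rw [Function.iterate_succ_apply]
                simp only [hα1]
                exact h2 t (by omega)
  · -- f is not a shifted power: every value has a preimage avoiding any given point
    have step : ∀ γ z : K, ∃ α, f.eval α = γ ∧ α ≠ z := by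
      intro γ z
      by_contra hcon
      push_neg at hcon
      have hall : ∀ x, (f - C γ).eval x = 0 → x = z := by
        intro x hx
        rw [eval_sub, eval_C, sub_eq_zero] at hx
        exact hcon x hx
      have heq := allRootsEq (f - C γ) (hgne γ) z hall
      rw [natDegree_sub_C, ← hdef] at heq
      exact hSM ⟨(f - C γ).leadingCoeff, z, γ, by
        rw [← heq]; ring⟩
    suffices h : ∀ m, 1 ≤ m → ∃ α : K,
        (fun x => f.eval x)^[m] α = 0 ∧ (∀ t < m, (fun x => f.eval x)^[t] α ≠ 0) by
      exact h m hm
    intro m hm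
    induction m, hm using Nat.le_induction with
    | base =>
        obtain ⟨α, h1, h2⟩ := step 0 0
        exact ⟨α, by simpa using h1, by
          intro t ht
          interval_cases t
          simpa using h2⟩
    | succ m hm ih =>
        obtain ⟨α', h1, h2⟩ := ih
        obtain ⟨α, hα1, hα2⟩ := step α' 0
        refine ⟨α, ?_, ?_⟩
        · rw [Function.iterate_succ_apply]
          simpa [hα1] using h1
        · intro t ht
          match t with
          | 0 => simpa using hα2
          | t + 1 =>
              rw [Function.iterate_succ_apply]
              simp only [hα1]
              exact h2 t (by omega)

/-- The core contradiction over an algebraically closed field, stated for polynomials. -/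
private lemma coreLemma (f : K[X]) (hd : 2 ≤ f.natDegree)
    (hmono : ¬ ∃ (c : K) (e : ℕ), f = C c * X ^ e)
    (n : ℕ) (k : ℕ → ℤ) (hk : ∃ i ∈ Finset.Icc 1 n, k i ≠ 0) (c : K) (hc : c ≠ 0)
    (heq : ∏ i ∈ Finset.Icc 1 n, ((fun p => f.comp p)^[i] X) ^ (k i).toNat
         = C c * ∏ i ∈ Finset.Icc 1 n, ((fun p => f.comp p)^[i] X) ^ (-(k i)).toNat) :
    False := by
  classical
  set s := (Finset.Icc 1 n).filter (fun i => k i ≠ 0) with hsdef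
  have hsne : s.Nonempty := by
    obtain ⟨i, hi, hki⟩ := hk
    exact ⟨i, Finset.mem_filter.2 ⟨hi, hki⟩⟩
  set m := s.max' hsne with hmdef
  have hms : m ∈ s := s.max'_mem hsne
  have hmIcc : m ∈ Finset.Icc 1 n := (Finset.mem_filter.1 hms).1
  have hkm : k m ≠ 0 := (Finset.mem_filter.1 hms).2
  have hm1 : 1 ≤ m := (Finset.mem_Icc.1 hmIcc).1
  obtain ⟨α, hα1, hα2⟩ := keyLemma f hd hmono m hm1
  have hiterne : ∀ i ∈ Finset.Icc 1 n, ((fun p => f.comp p)^[i] X) ≠ 0 := by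
    intro i hi
    exact iterNeZero f hd i (Finset.mem_Icc.1 hi).1
  have hPne : ∀ (g : ℕ → ℕ), ∀ i ∈ Finset.Icc 1 n,
      ((fun p => f.comp p)^[i] X) ^ (g i) ≠ 0 := by
    intro g i hi
    exact pow_ne_zero _ (hiterne i hi)
  -- taking root multiplicities at α
  have h1 := congrArg (rootMultiplicity α) heq
  rw [rmProd _ _ (hPne fun i => (k i).toNat) α,
    rootMultiplicity_mul (by
      exact mul_ne_zero (by simpa using hc)
        (Finset.prod_ne_zero_iff.2 (hPne fun i => (-(k i)).toNat))),
    rootMultiplicity_C,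
    rmProd _ _ (hPne fun i => (-(k i)).toNat) α, zero_add] at h1
  have hgen : ∀ (j : ℕ → ℤ), (∀ i, (j i = 0 ↔ k i = 0)) →
      ∑ i ∈ Finset.Icc 1 n, rootMultiplicity α (((fun p => f.comp p)^[i] X) ^ (j i).toNat)
        = (j m).toNat * rootMultiplicity α ((fun p => f.comp p)^[m] X) := by
    intro j hj
    rw [Finset.sum_eq_single_of_mem m hmIcc]
    · exact rmPow _ (hiterne m hmIcc) _ α
    · intro i hi him
      rw [rmPow _ (hiterne i hi) _ α]
      by_cases hik : k i = 0
      · rw [(hj i).2 hik]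
        simp
      · have his : i ∈ s := Finset.mem_filter.2 ⟨hi, hik⟩
        have : i ≤ m := s.le_max' i his
        have hrm0 : rootMultiplicity α ((fun p => f.comp p)^[i] X) = 0 := by
          apply rootMultiplicity_eq_zero
          intro hroot
          have hev := iterEval f i α
          rw [hroot] at hev
          exact hα2 i (by omega) hev.symm
        rw [hrm0, mul_zero]
  rw [hgen k (fun i => Iff.rfl), hgen (fun i => -(k i)) (fun i => neg_eq_zero)] at h1
  have hrmm : 0 < rootMultiplicity α ((fun p => f.comp p)^[m] X) := by
    rw [rootMultiplicity_pos (hiterne m hmIcc)]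
    show Polynomial.eval α _ = 0
    rw [iterEval]
    exact hα1
  have : (k m).toNat = (-(k m)).toNat :=
    Nat.eq_of_mul_eq_mul_right hrmm h1
  omega

end Key

/-- Let `F` have characteristic zero and `f ∈ F[X]` of degree at least `2`, not a monomial.
Then for every `n ≥ 1` the iterates `f^{(1)}, …, f^{(n)}` are multiplicatively independent
modulo constants: no product of them with integer exponents, not all zero, is a constant. -/
theorem stmt_13 {F : Type*} [Field F] [CharZero F] (f : F[X]) (hd : 2 ≤ f.natDegree)
    (hmono : ¬ ∃ (c : F) (e : ℕ), f = C c * X ^ e)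
    (n : ℕ) (hn : 1 ≤ n) (k : ℕ → ℤ) (hk : ∃ i ∈ Finset.Icc 1 n, k i ≠ 0) (c : F) :
    ∏ i ∈ Finset.Icc 1 n,
      (algebraMap F[X] (RatFunc F) ((fun p => f.comp p)^[i] X)) ^ (k i) ≠ RatFunc.C c := by
  intro h
  set A := algebraMap F[X] (RatFunc F) with hA
  have hinj : Function.Injective A := IsFractionRing.injective F[X] (RatFunc F)
  have hiterne : ∀ i ∈ Finset.Icc 1 n, ((fun p => f.comp p)^[i] X) ≠ 0 := fun i hi =>
    iterNeZero f hd i (Finset.mem_Icc.1 hi).1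
  have hane : ∀ i ∈ Finset.Icc 1 n, A ((fun p => f.comp p)^[i] X) ≠ 0 := by
    intro i hi
    simpa using fun h0 => hiterne i hi (hinj (by simpa using h0))
  -- c is nonzero
  have hc : c ≠ 0 := by
    intro hc0
    rw [hc0, map_zero] at h
    have : ∀ i ∈ Finset.Icc 1 n, (A ((fun p => f.comp p)^[i] X)) ^ (k i) ≠ 0 := by
      intro i hi
      exact zpow_ne_zero _ (hane i hi)
    exact Finset.prod_ne_zero_iff.2 this h
  -- turn the rational-function identity into a polynomial identity
  have hsplit : ∀ i ∈ Finset.Icc 1 n,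
      (A ((fun p => f.comp p)^[i] X)) ^ ((k i).toNat)
        = (A ((fun p => f.comp p)^[i] X)) ^ (k i)
          * (A ((fun p => f.comp p)^[i] X)) ^ ((-(k i)).toNat) := by
    intro i hi
    rw [← zpow_natCast _ ((k i).toNat), ← zpow_natCast _ ((-(k i)).toNat),
      ← zpow_add₀ (hane i hi)]
    congr 1
    omega
  have hprodeq : ∏ i ∈ Finset.Icc 1 n, (A ((fun p => f.comp p)^[i] X)) ^ ((k i).toNat)
      = RatFunc.C c * ∏ i ∈ Finset.Icc 1 n,
          (A ((fun p => f.comp p)^[i] X)) ^ ((-(k i)).toNat) := by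
    rw [Finset.prod_congr rfl hsplit, Finset.prod_mul_distrib, h]
  rw [← RatFunc.algebraMap_C (K := F) c, ← hA] at hprodeq
  have hpoly : ∏ i ∈ Finset.Icc 1 n, ((fun p => f.comp p)^[i] X) ^ ((k i).toNat)
      = C c * ∏ i ∈ Finset.Icc 1 n, ((fun p => f.comp p)^[i] X) ^ ((-(k i)).toNat) := by
    apply hinj
    rw [map_mul, map_prod, map_prod]
    simp only [map_pow]
    exact hprodeq
  -- move to the algebraic closure
  set K := AlgebraicClosure F with hK
  set φ : F →+* K := algebraMap F K with hφ
  have hφinj : Function.Injective φ := φ.injective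
  have hmap : ∏ i ∈ Finset.Icc 1 n, ((fun p => (f.map φ).comp p)^[i] X) ^ ((k i).toNat)
      = C (φ c) * ∏ i ∈ Finset.Icc 1 n,
          ((fun p => (f.map φ).comp p)^[i] X) ^ ((-(k i)).toNat) := by
    have := congrArg (Polynomial.mapRingHom φ) hpoly
    simp only [map_mul, map_prod, map_pow, coe_mapRingHom, Polynomial.map_C] at this
    simpa only [iterMap φ f] using this
  have hdK : 2 ≤ (f.map φ).natDegree := by
    rw [Polynomial.natDegree_map]
    exact hd
  have hmonoK : ¬ ∃ (c' : K) (e : ℕ), f.map φ = C c' * X ^ e := by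
    rintro ⟨c', e, hfe⟩
    apply hmono
    refine ⟨f.coeff e, e, ?_⟩
    ext i
    have hco := congrArg (fun p => Polynomial.coeff p i) hfe
    simp only [coeff_map, coeff_C_mul, coeff_X_pow] at hco
    by_cases hie : i = e
    · subst hie
      simp [coeff_C_mul, coeff_X_pow]
    · have : φ (f.coeff i) = 0 := by
        rw [hco, if_neg hie, mul_zero]
      have h0 : f.coeff i = 0 := hφinj (by simpa using this)
      simp [coeff_C_mul, coeff_X_pow, if_neg hie, h0]
  have hcK : φ c ≠ 0 := fun h0 => hc (hφinj (by simpa using h0))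
  exact coreLemma (f.map φ) hdK hmonoK n k hk (φ c) hcK hmap
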